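/- Let Σ be an abstract σ-algebra and f a nonnegative measurable function on Σ. Then there exists a sequence of simple data (aₙ, xₙ) on Σ whose induced simple functions sₙ satisfy sₙ ≤ sₙ₊₁ ≤ f for all n (in the order on nonnegative measurable functions) and sₙ ↗ f, i.e. for every t ∈ ℝ≥0∞, f (Set.Iic t) is a greatest lower bound of the set {sₙ (Set.Iic t) | n ∈ ℕ}. -/

import Mathlib

open scoped ENNReal

/-- A nonnegative measurable function on an abstract σ-algebra `A`:
a morphism of abstract σ-algebras from the Borel σ-algebra of `[0,∞]` to `A`,
encoded as a map on sets constrained on Borel sets. -/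
structure NNMeasFun (A : Type*) [BooleanAlgebra A] where
  toFun : Set ℝ≥0∞ → A
  map_empty : toFun ∅ = ⊥
  map_univ : toFun Set.univ = ⊤
  map_compl : ∀ s : Set ℝ≥0∞, MeasurableSet s → toFun sᶜ = (toFun s)ᶜ
  map_inter : ∀ s t : Set ℝ≥0∞, MeasurableSet s → MeasurableSet t →
    toFun (s ∩ t) = toFun s ⊓ toFun t
  map_iUnion : ∀ s : ℕ → Set ℝ≥0∞, (∀ n, MeasurableSet (s n)) →
    IsLUB (Set.range fun n => toFun (s n)) (toFun (⋃ n, s n))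

/-- Simple data on `A`: a pairwise disjoint finite family with supremum `⊤`,
together with values in `[0,∞]`. -/
structure SimpleData (A : Type*) [BooleanAlgebra A] where
  m : ℕ
  a : Fin m → A
  x : Fin m → ℝ≥0∞
  disjoint : ∀ i j, i ≠ j → a i ⊓ a j = ⊥
  sup_eq_top : Finset.univ.sup a = ⊤

open scoped Classical in
/-- The simple nonnegative measurable function induced by simple data. -/
noncomputable def SimpleData.toFun {A : Type*} [BooleanAlgebra A] (d : SimpleData A)
    (b : Set ℝ≥0∞) : A :=
  (Finset.univ.filter fun i => d.x i ∈ b).sup d.a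

open scoped NNReal Classical

/-! ### Auxiliary constructions -/

noncomputable def ApproxAux.cut (n i : ℕ) : ℝ≥0∞ := i / 2 ^ n

noncomputable def ApproxAux.Sset (n i : ℕ) : Set ℝ≥0∞ :=
  if i ≤ n * 2 ^ n then Set.Ici (ApproxAux.cut n i) else ∅

noncomputable def ApproxAux.Lidx (n : ℕ) (t : ℝ≥0∞) : ℕ :=
  if t < n then ⌊(t * 2 ^ n).toNNReal⌋₊ + 1 else n * 2 ^ n + 1

namespace ApproxAux

lemma two_pow_ne_zero (n : ℕ) : (2 : ℝ≥0∞) ^ n ≠ 0 := by positivity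

lemma two_pow_ne_top (n : ℕ) : (2 : ℝ≥0∞) ^ n ≠ ∞ :=
  ENNReal.pow_ne_top (by norm_num)

lemma cut_mono {n i j : ℕ} (h : i ≤ j) : cut n i ≤ cut n j :=
  ENNReal.div_le_div_right (by exact_mod_cast Nat.cast_le.mpr h) _

lemma Sset_meas (n i : ℕ) : MeasurableSet (Sset n i) := by
  unfold Sset; split <;> simp [measurableSet_Ici]

lemma Sset_anti {n i j : ℕ} (h : i ≤ j) : Sset n j ⊆ Sset n i := by
  unfold Sset
  split
  · rw [if_pos (le_trans h ‹_›)]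
    exact Set.Ici_subset_Ici.mpr (cut_mono h)
  · simp

lemma Sset_zero (n : ℕ) : Sset n 0 = Set.univ := by
  simp only [Sset, cut, Nat.cast_zero, ENNReal.zero_div, Nat.zero_le, if_pos]
  exact Set.Ici_bot

lemma Sset_last (n : ℕ) : Sset n (n * 2 ^ n + 1) = ∅ := by
  simp [Sset]

/-- Characterization of `Lidx`. -/
lemma cut_le_iff {n : ℕ} {t : ℝ≥0∞} {i : ℕ} (hi : i ≤ n * 2 ^ n) :
    cut n i ≤ t ↔ i < Lidx n t := by
  unfold Lidx
  by_cases ht : t < n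
  · rw [if_pos ht]
    have htop : t ≠ ∞ := (ht.trans (ENNReal.natCast_lt_top n)).ne
    have hv : t * 2 ^ n ≠ ∞ := ENNReal.mul_ne_top htop (two_pow_ne_top n)
    rw [cut, ENNReal.div_le_iff (two_pow_ne_zero n) (two_pow_ne_top n), Nat.lt_succ_iff,
      Nat.le_floor_iff (zero_le : (0:ℝ≥0) ≤ (t * 2 ^ n).toNNReal), ← ENNReal.coe_le_coe,
      ENNReal.coe_toNNReal hv, ENNReal.coe_natCast]
  · rw [if_neg ht]
    have h1 : cut n i ≤ t := by
      calc cut n i ≤ cut n (n * 2 ^ n) := cut_mono hi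
        _ = n := by
          rw [cut]; push_cast
          rw [mul_div_assoc, ENNReal.div_self (two_pow_ne_zero n) (two_pow_ne_top n), mul_one]
        _ ≤ t := not_lt.mp ht
    simp [h1, Nat.lt_succ_iff, hi]

lemma Lidx_pos (n : ℕ) (t : ℝ≥0∞) : 0 < Lidx n t := by
  unfold Lidx; split <;> omega

lemma Lidx_le {n : ℕ} {t : ℝ≥0∞} (ht : t < n) : Lidx n t ≤ n * 2 ^ n := by
  rw [Lidx, if_pos ht]
  have htop : t ≠ ∞ := (ht.trans (ENNReal.natCast_lt_top n)).ne
  have hv : t * 2 ^ n ≠ ∞ := ENNReal.mul_ne_top htop (two_pow_ne_top n)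
  have h2 : t * 2 ^ n < ((n * 2 ^ n : ℕ) : ℝ≥0∞) := by
    push_cast
    exact ENNReal.mul_lt_mul_left (two_pow_ne_zero n) (two_pow_ne_top n) ht
  rw [← ENNReal.coe_toNNReal hv] at h2
  have h3 : (t * 2 ^ n).toNNReal < ((n * 2 ^ n : ℕ) : ℝ≥0) := by exact_mod_cast h2
  have := (Nat.floor_lt (zero_le : (0:ℝ≥0) ≤ (t * 2 ^ n).toNNReal)).mpr h3
  omega

lemma Lidx_eq_of_not_lt {n : ℕ} {t : ℝ≥0∞} (ht : ¬ t < n) : Lidx n t = n * 2 ^ n + 1 :=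
  if_neg ht

lemma t_lt_cut_Lidx {n : ℕ} {t : ℝ≥0∞} (ht : t < n) : t < cut n (Lidx n t) :=
  not_le.mp fun h => lt_irrefl _ ((cut_le_iff (Lidx_le ht)).mp h)

lemma cut_double (n i : ℕ) : cut (n + 1) (2 * i) = cut n i := by
  unfold cut
  rw [pow_succ]
  push_cast
  rw [mul_comm (2 : ℝ≥0∞) (i : ℝ≥0∞), mul_comm ((2:ℝ≥0∞) ^ n) 2, mul_comm (2:ℝ≥0∞) ((2:ℝ≥0∞)^n)]
  exact ENNReal.mul_div_mul_right _ _ (by norm_num) (by norm_num)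

variable {A : Type*} [BooleanAlgebra A]

lemma fmono (f : NNMeasFun A) {s t : Set ℝ≥0∞} (hs : MeasurableSet s) (ht : MeasurableSet t)
    (h : s ⊆ t) : f.toFun s ≤ f.toFun t := by
  have h1 := f.map_inter s t hs ht
  rw [Set.inter_eq_left.mpr h] at h1
  rw [h1]; exact inf_le_right

lemma image_val (m : ℕ) : (Finset.univ : Finset (Fin m)).image Fin.val = Finset.range m := by
  ext j
  simp only [Finset.mem_image, Finset.mem_univ, true_and, Finset.mem_range]
  exact ⟨fun ⟨i, hi⟩ => hi ▸ i.isLt, fun h => ⟨⟨j, h⟩, rfl⟩⟩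

lemma sup_filter_eq_compl {m : ℕ} (a : Fin m → A) (p : Fin m → Prop) [inst : DecidablePred p]
    (htop : Finset.univ.sup a = ⊤) (c : A) (hle : ∀ i, p i → a i ≤ cᶜ)
    (hge : ∀ i, ¬ p i → a i ≤ c) : (Finset.univ.filter p).sup a = cᶜ := by
  apply le_antisymm
  · exact Finset.sup_le fun i hi => hle i (Finset.mem_filter.mp hi).2
  · have hNle : (Finset.univ.filter fun i => ¬ p i).sup a ≤ c :=
      Finset.sup_le fun i hi => hge i (Finset.mem_filter.mp hi).2
    have hsplit : (Finset.univ.filter p).sup a ⊔ (Finset.univ.filter fun i => ¬ p i).sup a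
        = ⊤ := by
      rw [← Finset.sup_union, Finset.filter_union_filter_not_eq, htop]
    have htop2 : (Finset.univ.filter p).sup a ⊔ c = ⊤ :=
      le_antisymm le_top (hsplit ▸ sup_le_sup_left hNle _)
    calc cᶜ = ⊤ \ c := (top_sdiff' _).symm
      _ = ((Finset.univ.filter p).sup a ⊔ c) \ c := by rw [htop2]
      _ = (Finset.univ.filter p).sup a \ c := sup_sdiff_right_self
      _ ≤ _ := sdiff_le

lemma telesc (b : ℕ → A) (hb : ∀ i, b (i + 1) ≤ b i) :
    ∀ k, (Finset.range k).sup (fun i => b i \ b (i + 1)) = b 0 \ b k := by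
  intro k
  induction k with
  | zero => simp
  | succ k ih =>
    have hmono : ∀ {i j : ℕ}, i ≤ j → b j ≤ b i := fun h =>
      (antitone_nat_of_succ_le hb) h
    rw [Finset.range_add_one, Finset.sup_insert, ih, sup_comm,
      sdiff_sup_sdiff_cancel (hmono (Nat.zero_le k)) (hb k)]

/-- The approximating simple data. -/
noncomputable def approx (f : NNMeasFun A) (n : ℕ) : SimpleData A where
  m := n * 2 ^ n + 1
  a i := f.toFun (Sset n i) \ f.toFun (Sset n (i + 1))
  x i := cut n i
  disjoint := by
    intro i j hij
    have key : ∀ i j : Fin (n * 2 ^ n + 1), (i : ℕ) < (j : ℕ) →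
        (f.toFun (Sset n i) \ f.toFun (Sset n (i + 1))) ⊓
          (f.toFun (Sset n j) \ f.toFun (Sset n (j + 1))) = ⊥ := by
      intro i j h
      have h1 : f.toFun (Sset n j) ≤ f.toFun (Sset n ((i : ℕ) + 1)) :=
        fmono f (Sset_meas _ _) (Sset_meas _ _) (Sset_anti h)
      have h2 : f.toFun (Sset n i) \ f.toFun (Sset n ((i : ℕ) + 1)) ≤
          (f.toFun (Sset n ((i : ℕ) + 1)))ᶜ := by
        rw [sdiff_eq]; exact inf_le_right
      refine le_bot_iff.mp ?_
      calc (f.toFun (Sset n i) \ f.toFun (Sset n ((i : ℕ) + 1))) ⊓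
            (f.toFun (Sset n j) \ f.toFun (Sset n ((j : ℕ) + 1)))
          ≤ (f.toFun (Sset n ((i : ℕ) + 1)))ᶜ ⊓ f.toFun (Sset n ((i : ℕ) + 1)) :=
            inf_le_inf h2 (sdiff_le.trans h1)
        _ = ⊥ := compl_inf_eq_bot
    rcases lt_or_gt_of_ne (fun h => hij (Fin.ext (by exact_mod_cast congrArg Fin.val h))) with h | h
    · exact key i j h
    · rw [inf_comm]; exact key j i h
  sup_eq_top := by
    have : (Finset.univ.sup fun i : Fin (n * 2 ^ n + 1) =>
        f.toFun (Sset n i) \ f.toFun (Sset n (i + 1))) =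
        (Finset.range (n * 2 ^ n + 1)).sup
          (fun i => f.toFun (Sset n i) \ f.toFun (Sset n (i + 1))) := by
      rw [← image_val, Finset.sup_image]
      rfl
    rw [this, telesc _ (fun i => fmono f (Sset_meas _ _) (Sset_meas _ _)
        (Sset_anti (Nat.le_succ i))), Sset_zero, Sset_last, f.map_univ, f.map_empty,
      sdiff_bot]

/-- Key computation: the approximating simple function evaluated on `Iic t`. -/
lemma approx_toFun (f : NNMeasFun A) (n : ℕ) (t : ℝ≥0∞) :
    (approx f n).toFun (Set.Iic t) = (f.toFun (Sset n (Lidx n t)))ᶜ := by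
  set L := Lidx n t with hL
  have hb : ∀ {i j : ℕ}, i ≤ j → f.toFun (Sset n j) ≤ f.toFun (Sset n i) := fun h =>
    fmono f (Sset_meas _ _) (Sset_meas _ _) (Sset_anti h)
  have hchar : ∀ i : Fin (n * 2 ^ n + 1), ((approx f n).x i ∈ Set.Iic t ↔ (i : ℕ) < L) := by
    intro i
    exact cut_le_iff (Nat.lt_succ_iff.mp i.isLt)
  have ha : ∀ i : Fin (n * 2 ^ n + 1),
      (approx f n).a i = f.toFun (Sset n i) \ f.toFun (Sset n ((i : ℕ) + 1)) := fun _ => rfl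
  unfold SimpleData.toFun
  refine sup_filter_eq_compl (inst := fun i => Classical.propDecidable _) _ _
    (approx f n).sup_eq_top _ ?_ ?_
  · intro i hi
    have hiL : (i : ℕ) < L := (hchar i).mp hi
    have h1 : (approx f n).a i ≤ (f.toFun (Sset n ((i : ℕ) + 1)))ᶜ := by
      rw [ha i, sdiff_eq]; exact inf_le_right
    exact h1.trans (compl_le_compl (hb hiL))
  · intro i hi
    have hiL : L ≤ (i : ℕ) := not_lt.mp fun h => hi ((hchar i).mpr h)
    exact (ha i ▸ sdiff_le).trans (hb hiL)

lemma f_le_approx (f : NNMeasFun A) (n : ℕ) (t : ℝ≥0∞) :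
    f.toFun (Set.Iic t) ≤ (approx f n).toFun (Set.Iic t) := by
  rw [approx_toFun]
  by_cases ht : t < n
  · have hL := Lidx_le ht
    rw [Sset, if_pos hL, ← Set.compl_Iio, f.map_compl _ measurableSet_Iio, compl_compl]
    exact fmono f measurableSet_Iic measurableSet_Iio
      (fun y hy => lt_of_le_of_lt hy (t_lt_cut_Lidx ht))
  · rw [Lidx_eq_of_not_lt ht, Sset_last, f.map_empty]
    exact le_of_le_of_eq le_top compl_bot.symm

lemma approx_anti (f : NNMeasFun A) (n : ℕ) (t : ℝ≥0∞) :
    (approx f (n + 1)).toFun (Set.Iic t) ≤ (approx f n).toFun (Set.Iic t) := by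
  rw [approx_toFun, approx_toFun]
  by_cases ht : t < n
  · have ht' : t < (n + 1 : ℕ) := ht.trans (by exact_mod_cast Nat.cast_lt.mpr (Nat.lt_succ_self n))
    apply compl_le_compl
    apply fmono f (Sset_meas _ _) (Sset_meas _ _)
    -- Sset n (Lidx n t) ⊆ Sset (n+1) (Lidx (n+1) t)
    have h2L : 2 * Lidx n t ≤ (n + 1) * 2 ^ (n + 1) := by
      have := Lidx_le ht
      have : 2 * Lidx n t ≤ 2 * (n * 2 ^ n) := by omega
      calc 2 * Lidx n t ≤ 2 * (n * 2 ^ n) := this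
        _ ≤ (n + 1) * 2 ^ (n + 1) := by ring_nf; nlinarith [pow_pos (by norm_num : 0 < 2) n]
    have hnotle : ¬ cut (n + 1) (2 * Lidx n t) ≤ t := by
      rw [cut_double]
      exact not_le.mpr (t_lt_cut_Lidx ht)
    have hLle : Lidx (n + 1) t ≤ 2 * Lidx n t := by
      by_contra h
      exact hnotle ((cut_le_iff h2L).mpr (not_le.mp h))
    rw [Sset, if_pos (Lidx_le ht), Sset, if_pos (Lidx_le ht')]
    apply Set.Ici_subset_Ici.mpr
    calc cut (n + 1) (Lidx (n + 1) t) ≤ cut (n + 1) (2 * Lidx n t) := cut_mono hLle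
      _ = cut n (Lidx n t) := cut_double n _
  · rw [Lidx_eq_of_not_lt ht, Sset_last, f.map_empty, compl_bot]
    exact le_top

lemma iUnion_Sset (t : ℝ≥0∞) : (⋃ n, Sset n (Lidx n t)) = Set.Ioi t := by
  ext y
  simp only [Set.mem_iUnion, Set.mem_Ioi]
  constructor
  · rintro ⟨n, hy⟩
    rw [Sset] at hy
    split at hy
    · rename_i hle
      have ht : t < n := by
        by_contra h
        rw [Lidx, if_neg h] at hle
        omega
      exact lt_of_lt_of_le (t_lt_cut_Lidx ht) hy
    · exact absurd hy (Set.notMem_empty y)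
  · intro hy
    have htop : t ≠ ∞ := (lt_of_lt_of_le hy le_top).ne
    obtain ⟨n₀, hn₀⟩ := ENNReal.exists_nat_gt htop
    obtain ⟨n₁, hn₁⟩ := ENNReal.exists_inv_two_pow_lt (tsub_pos_of_lt hy).ne'
    set N := max n₀ n₁ with hNdef
    have htN : t < N := hn₀.trans_le (by exact_mod_cast Nat.cast_le.mpr (le_max_left n₀ n₁))
    refine ⟨N, ?_⟩
    rw [Sset, if_pos (Lidx_le htN)]
    show cut N (Lidx N t) ≤ y
    apply le_of_lt
    obtain ⟨p, hp⟩ : ∃ p, Lidx N t = p + 1 := ⟨Lidx N t - 1, by have := Lidx_pos N t; omega⟩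
    have hprev : cut N p ≤ t := by
      refine (cut_le_iff ?_).mpr (by omega)
      have := Lidx_le htN; omega
    have hstep : cut N (Lidx N t) = cut N p + 2⁻¹ ^ N := by
      rw [hp, cut, cut]
      push_cast
      rw [ENNReal.add_div, one_div, ← ENNReal.inv_pow]
    have hpow : (2⁻¹ : ℝ≥0∞) ^ N ≤ 2⁻¹ ^ n₁ := by
      rw [← ENNReal.inv_pow, ← ENNReal.inv_pow]
      exact ENNReal.inv_le_inv.mpr (pow_le_pow_right₀ (by norm_num) (le_max_right n₀ n₁))
    calc cut N (Lidx N t) = cut N p + 2⁻¹ ^ N := hstep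
      _ ≤ t + 2⁻¹ ^ n₁ := add_le_add hprev hpow
      _ < t + (y - t) := ENNReal.add_lt_add_left htop hn₁
      _ = y := add_tsub_cancel_of_le hy.le


end ApproxAux

/-- Every nonnegative measurable function on an abstract σ-algebra is the
increasing limit of a sequence of simple functions. -/
theorem exists_simple_approximation {A : Type*} [BooleanAlgebra A]
    (hA : ∀ a : ℕ → A, ∃ s, IsLUB (Set.range a) s) (f : NNMeasFun A) :
    ∃ d : ℕ → SimpleData A,
      (∀ (n : ℕ) (t : ℝ≥0∞), (d (n + 1)).toFun (Set.Iic t) ≤ (d n).toFun (Set.Iic t)) ∧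
      (∀ (n : ℕ) (t : ℝ≥0∞), f.toFun (Set.Iic t) ≤ (d n).toFun (Set.Iic t)) ∧
      (∀ t : ℝ≥0∞,
        IsGLB (Set.range fun n => (d n).toFun (Set.Iic t)) (f.toFun (Set.Iic t))) := by
  open ApproxAux in
  refine ⟨approx f, fun n t => approx_anti f n t, fun n t => f_le_approx f n t, fun t => ?_⟩
  constructor
  · rintro _ ⟨n, rfl⟩
    exact ApproxAux.f_le_approx f n t
  · intro b hb
    rw [← compl_le_compl_iff_le]
    have hcompl : (f.toFun (Set.Iic t))ᶜ = f.toFun (Set.Ioi t) := by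
      rw [← f.map_compl _ measurableSet_Iic, Set.compl_Iic]
    rw [hcompl]
    have hlub := f.map_iUnion (fun n => ApproxAux.Sset n (ApproxAux.Lidx n t))
      (fun n => ApproxAux.Sset_meas _ _)
    rw [ApproxAux.iUnion_Sset t] at hlub
    apply hlub.2
    rintro _ ⟨n, rfl⟩
    have hbn : b ≤ (ApproxAux.approx f n).toFun (Set.Iic t) := hb ⟨n, rfl⟩
    rw [ApproxAux.approx_toFun] at hbn
    have := compl_le_compl hbn
    rwa [compl_compl] at this
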